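/- For every integer d ≥ 3, ∫₀^∞ [I₀(x/d)]^d e^{−x} dx = ∑_{k₁≥0} ⋯ ∑_{k_d≥0} Γ(2k₁+⋯+2k_d+1) / ((k₁)!² ⋯ (k_d)!² · (2d)^{2(k₁+⋯+k_d)}), i.e. the integral equals the d-fold series obtained by expanding the integrand in powers of x and integrating term by term, and this series is convergent. -/

import Mathlib

open MeasureTheory Real Finset

/-- The modified Bessel function of the first kind of order zero,
`I₀(x) = ∑_{k ≥ 0} (x/2)^{2k} / (k!)²`. -/
noncomputable def besselI0 (x : ℝ) : ℝ :=
  ∑' k : ℕ, (x / 2) ^ (2 * k) / ((k.factorial : ℝ)) ^ 2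

lemma centralBinom_sq_mul_le (k : ℕ) : (Nat.centralBinom k)^2 * (k+1) ≤ 16^k := by
  induction k with
  | zero => simp [Nat.centralBinom]
  | succ n ih =>
    have key := Nat.succ_mul_centralBinom_succ n
    have h1 : ((n+1) * Nat.centralBinom (n+1))^2 * (n+2) = (2*(2*n+1))^2 * ((Nat.centralBinom n)^2 * (n+2)) := by
      rw [key]; ring
    have h2 : (2*(2*n+1))^2 * (n+2) ≤ 16 * (n+1)^2 * (n+1) := by nlinarith
    have h3 : (n+1)^2 * ((Nat.centralBinom (n+1))^2 * (n+2)) ≤ (n+1)^2 * (16 * 16^n) := by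
      calc (n+1)^2 * ((Nat.centralBinom (n+1))^2 * (n+2))
          = (2*(2*n+1))^2 * (Nat.centralBinom n)^2 * (n+2) := by rw [← mul_assoc, ← mul_pow, key]; ring
        _ ≤ 16 * (n+1)^2 * (n+1) * (Nat.centralBinom n)^2 := by nlinarith [Nat.centralBinom_pos n]
        _ = (n+1)^2 * (16 * ((Nat.centralBinom n)^2 * (n+1))) := by ring
        _ ≤ (n+1)^2 * (16 * 16^n) := by
            exact Nat.mul_le_mul_left _ (Nat.mul_le_mul_left _ ih)
    have := Nat.le_of_mul_le_mul_left h3 (by positivity)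
    calc (Nat.centralBinom (n+1))^2 * (n+2) ≤ 16 * 16^n := this
      _ = 16^(n+1) := by ring

lemma fact_sq_centralBinom (k : ℕ) : ((2*k).factorial : ℝ) = Nat.centralBinom k * (k.factorial:ℝ)^2 := by
  have := Nat.choose_mul_factorial_mul_factorial (Nat.le_mul_of_pos_left k (by norm_num : 0 < 2))
  have h : Nat.centralBinom k * k.factorial * k.factorial = (2*k).factorial := by
    simpa [Nat.centralBinom, two_mul k] using this
  push_cast [← h]; ring

lemma one_le_fact (k : ℕ) : (1:ℝ) ≤ (k.factorial:ℝ) := by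
  exact_mod_cast Nat.one_le_iff_ne_zero.2 (Nat.factorial_ne_zero k)

lemma summable_besselTerm (y : ℝ) : Summable (fun k : ℕ => (y/2)^(2*k)/((k.factorial:ℝ))^2) := by
  have hle : ∀ k : ℕ, (y/2)^(2*k)/((k.factorial:ℝ))^2 ≤ ((y/2)^2)^k / (k.factorial:ℝ) := by
    intro k
    have h2 : (k.factorial:ℝ) ≤ ((k.factorial:ℝ))^2 := by nlinarith [one_le_fact k]
    rw [pow_mul]
    exact div_le_div_of_nonneg_left (by positivity) (by positivity) h2
  have hnn : ∀ k : ℕ, 0 ≤ (y/2)^(2*k)/((k.factorial:ℝ))^2 := by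
    intro k; rw [pow_mul]; positivity
  exact Summable.of_nonneg_of_le hnn hle (Real.summable_pow_div_factorial _)

lemma summable_coshTerm (y : ℝ) : Summable (fun k : ℕ => y^(2*k)/(((2*k).factorial:ℝ))) := by
  have hle : ∀ k : ℕ, y^(2*k)/(((2*k).factorial:ℝ)) ≤ (y^2)^k / (k.factorial:ℝ) := by
    intro k
    have h2 : (k.factorial:ℝ) ≤ (((2*k).factorial:ℝ)) := by
      exact_mod_cast Nat.factorial_le (by omega)
    rw [pow_mul]
    exact div_le_div_of_nonneg_left (by positivity) (by positivity) h2
  have hnn : ∀ k : ℕ, 0 ≤ y^(2*k)/(((2*k).factorial:ℝ)) := by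
    intro k; rw [pow_mul]; positivity
  exact Summable.of_nonneg_of_le hnn hle (Real.summable_pow_div_factorial _)

lemma exp_eq_tsum' (y : ℝ) : Real.exp y = ∑' n : ℕ, y^n / n.factorial := by
  rw [Real.exp_eq_exp_ℝ, NormedSpace.exp_eq_tsum_div]

lemma cosh_tsum_le_exp {y : ℝ} (hy : 0 ≤ y) : (∑' k : ℕ, y^(2*k)/(((2*k).factorial:ℝ))) ≤ Real.exp y := by
  rw [exp_eq_tsum']
  exact (summable_coshTerm y).tsum_le_tsum_of_inj (fun k => 2*k) (fun a b h => by dsimp at h; omega)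
    (fun c _ => by positivity) (fun k => le_refl _)
    (Real.summable_pow_div_factorial _)

lemma cb_sqrt_le (k : ℕ) : (Nat.centralBinom k : ℝ) * Real.sqrt (k+1) ≤ 4^k := by
  have h := centralBinom_sq_mul_le k
  have hR : ((Nat.centralBinom k : ℝ))^2 * (k+1) ≤ (4^k)^2 := by
    have : ((16:ℝ))^k = ((4:ℝ)^k)^2 := by
      rw [show (16:ℝ) = 4^2 by norm_num, ← pow_mul, ← pow_mul, mul_comm]
    calc ((Nat.centralBinom k : ℝ))^2 * (k+1) ≤ (16:ℝ)^k := by exact_mod_cast h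
      _ = _ := this
  have hsq : ((Nat.centralBinom k : ℝ) * Real.sqrt (k+1))^2 ≤ (4^k)^2 := by
    rw [mul_pow, Real.sq_sqrt (by positivity)]
    exact hR
  exact le_of_pow_le_pow_left₀ (by norm_num) (by positivity) hsq

lemma cb_le (k : ℕ) : (Nat.centralBinom k : ℝ) ≤ 4^k := by
  have h1 : (1:ℝ) ≤ Real.sqrt (k+1) := by
    nlinarith [Real.sq_sqrt (by positivity : (0:ℝ) ≤ (k:ℝ)+1), Real.sqrt_nonneg ((k:ℝ)+1),
      Nat.cast_nonneg (α := ℝ) k]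
  nlinarith [cb_sqrt_le k, Nat.cast_nonneg (α := ℝ) (Nat.centralBinom k), Real.sqrt_nonneg ((k:ℝ)+1)]

lemma besselTerm_eq (y : ℝ) (k : ℕ) :
    (y/2)^(2*k)/((k.factorial:ℝ))^2 = (Nat.centralBinom k : ℝ) * y^(2*k) / ((4:ℝ)^k * ((2*k).factorial:ℝ)) := by
  have h := fact_sq_centralBinom k
  have hf : ((k.factorial:ℝ))^2 ≠ 0 := by positivity
  have hcb : (Nat.centralBinom k : ℝ) ≠ 0 := by
    exact_mod_cast (Nat.centralBinom_pos k).ne'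
  have h4 : ((4:ℝ))^k ≠ 0 := by positivity
  have hy2 : (y/2)^(2*k) = y^(2*k) / (4:ℝ)^k := by
    rw [div_pow, pow_mul, pow_mul]; norm_num
  rw [hy2, h]
  field_simp
lemma sqrt_one_add_le {y : ℝ} (hy : 0 ≤ y) : Real.sqrt (1+y) ≤ Real.sqrt 2 * Real.exp (y/4) := by
  have h1 : (1:ℝ) + y ≤ 2 * Real.exp (y/2) := by
    have := Real.add_one_le_exp (y/2)
    nlinarith
  have h2 : Real.sqrt (1+y) ≤ Real.sqrt (2 * Real.exp (y/2)) := Real.sqrt_le_sqrt h1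
  rw [Real.sqrt_mul (by norm_num)] at h2
  have h3 : Real.sqrt (Real.exp (y/2)) = Real.exp (y/4) := by
    rw [show Real.exp (y/2) = (Real.exp (y/4))^2 by rw [sq, ← Real.exp_add]; ring_nf]
    exact Real.sqrt_sq (Real.exp_nonneg _)
  rwa [h3] at h2

lemma termwise_bound {y : ℝ} (hy : 0 ≤ y) (k : ℕ) :
    ((y/2)^(2*k)/((k.factorial:ℝ))^2) * Real.sqrt (1+y) ≤
      Real.sqrt 8 * (y^(2*k)/(((2*k).factorial:ℝ)))
      + Real.sqrt 2 * Real.exp (0.45*y) * ((y/2)^(2*k)/(((2*k).factorial:ℝ))) := by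
  have hA : (0:ℝ) ≤ y^(2*k) := by rw [pow_mul]; positivity
  have hA2 : (0:ℝ) ≤ (y/2)^(2*k) := by rw [pow_mul]; positivity
  have hF : (0:ℝ) < ((2*k).factorial:ℝ) := by positivity
  have hcb : (0:ℝ) ≤ (Nat.centralBinom k : ℝ) := Nat.cast_nonneg _
  rcases le_or_gt (1+y) (8*(k+1)) with hcase | hcase
  · -- big k
    have hs : Real.sqrt (1+y) ≤ Real.sqrt 8 * Real.sqrt (k+1) := by
      rw [← Real.sqrt_mul (by norm_num)]
      exact Real.sqrt_le_sqrt (by push_cast; linarith)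
    have key : ((y/2)^(2*k)/((k.factorial:ℝ))^2) * Real.sqrt (1+y)
        ≤ Real.sqrt 8 * (y^(2*k)/(((2*k).factorial:ℝ))) := by
      rw [besselTerm_eq]
      have e1 : (Nat.centralBinom k : ℝ) * y^(2*k) / ((4:ℝ)^k * ((2*k).factorial:ℝ)) * Real.sqrt (1+y)
          ≤ (Nat.centralBinom k : ℝ) * y^(2*k) / ((4:ℝ)^k * ((2*k).factorial:ℝ)) * (Real.sqrt 8 * Real.sqrt (k+1)) := by
        apply mul_le_mul_of_nonneg_left hs (by positivity)
      refine e1.trans ?_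
      rw [div_mul_eq_mul_div, div_le_iff₀ (by positivity)]
      have : (Nat.centralBinom k : ℝ) * Real.sqrt (k+1) ≤ (4:ℝ)^k := cb_sqrt_le k
      calc (Nat.centralBinom k : ℝ) * y^(2*k) * (Real.sqrt 8 * Real.sqrt (k+1))
          = Real.sqrt 8 * (((Nat.centralBinom k : ℝ) * Real.sqrt (k+1)) * y^(2*k)) := by ring
        _ ≤ Real.sqrt 8 * ((4:ℝ)^k * y^(2*k)) := by
            apply mul_le_mul_of_nonneg_left _ (Real.sqrt_nonneg _)
            exact mul_le_mul_of_nonneg_right this hA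
        _ = Real.sqrt 8 * (y^(2*k)/(((2*k).factorial:ℝ))) * ((4:ℝ)^k * ((2*k).factorial:ℝ)) := by
            field_simp
    refine key.trans ?_
    have : (0:ℝ) ≤ Real.sqrt 2 * Real.exp (0.45*y) * ((y/2)^(2*k)/(((2*k).factorial:ℝ))) := by positivity
    linarith
  · -- small k : 8(k+1) < 1+y
    have hky : (2*k:ℝ) ≤ y/4 := by push_cast at hcase ⊢; linarith
    have h2k : ((2:ℝ))^(2*k) ≤ Real.exp (0.175*y) := by
      rw [show ((2:ℝ))^(2*k) = Real.exp (((2*k : ℕ):ℝ) * Real.log 2) by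
        rw [← Real.log_pow, Real.exp_log (by positivity)]]
      apply Real.exp_le_exp.mpr
      have hlog : Real.log 2 ≤ 0.7 := le_of_lt (Real.log_two_lt_d9.trans (by norm_num))
      have hlog0 : 0 ≤ Real.log 2 := Real.log_nonneg (by norm_num)
      push_cast
      nlinarith [mul_le_mul_of_nonneg_right hky hlog0]
    have hterm : (y/2)^(2*k)/((k.factorial:ℝ))^2 ≤ ((2:ℝ))^(2*k) * ((y/2)^(2*k)/(((2*k).factorial:ℝ))) := by
      rw [besselTerm_eq]
      have hy2 : y^(2*k) = (2:ℝ)^(2*k) * (y/2)^(2*k) := by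
        rw [← mul_pow]; ring_nf
      rw [hy2]
      rw [div_le_iff₀ (by positivity)]
      calc (Nat.centralBinom k : ℝ) * ((2:ℝ)^(2*k) * (y/2)^(2*k))
          ≤ (4:ℝ)^k * ((2:ℝ)^(2*k) * (y/2)^(2*k)) := by
            apply mul_le_mul_of_nonneg_right (cb_le k) (by positivity)
        _ = (2:ℝ)^(2*k) * ((y/2)^(2*k)/(((2*k).factorial:ℝ))) * ((4:ℝ)^k * ((2*k).factorial:ℝ)) := by
            field_simp
    have hsq : Real.sqrt (1+y) ≤ Real.sqrt 2 * Real.exp (y/4) := sqrt_one_add_le hy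
    have key : ((y/2)^(2*k)/((k.factorial:ℝ))^2) * Real.sqrt (1+y)
        ≤ Real.sqrt 2 * Real.exp (0.45*y) * ((y/2)^(2*k)/(((2*k).factorial:ℝ))) := by
      have e1 : ((y/2)^(2*k)/((k.factorial:ℝ))^2) * Real.sqrt (1+y)
          ≤ (((2:ℝ))^(2*k) * ((y/2)^(2*k)/(((2*k).factorial:ℝ)))) * (Real.sqrt 2 * Real.exp (y/4)) := by
        apply mul_le_mul hterm hsq (Real.sqrt_nonneg _) (by positivity)
      refine e1.trans ?_
      have e2 : ((2:ℝ))^(2*k) * Real.exp (y/4) ≤ Real.exp (0.45*y) := by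
        calc ((2:ℝ))^(2*k) * Real.exp (y/4) ≤ Real.exp (0.175*y) * Real.exp (y/4) := by
              apply mul_le_mul_of_nonneg_right h2k (Real.exp_nonneg _)
          _ = Real.exp (0.175*y + y/4) := by rw [← Real.exp_add]
          _ ≤ Real.exp (0.45*y) := Real.exp_le_exp.mpr (by linarith)
      calc (((2:ℝ))^(2*k) * ((y/2)^(2*k)/(((2*k).factorial:ℝ)))) * (Real.sqrt 2 * Real.exp (y/4))
          = (((2:ℝ))^(2*k) * Real.exp (y/4)) * Real.sqrt 2 * ((y/2)^(2*k)/(((2*k).factorial:ℝ))) := by ring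
        _ ≤ Real.exp (0.45*y) * Real.sqrt 2 * ((y/2)^(2*k)/(((2*k).factorial:ℝ))) := by
            apply mul_le_mul_of_nonneg_right (mul_le_mul_of_nonneg_right e2 (Real.sqrt_nonneg _)) (by positivity)
        _ = Real.sqrt 2 * Real.exp (0.45*y) * ((y/2)^(2*k)/(((2*k).factorial:ℝ))) := by ring
    refine key.trans ?_
    have : (0:ℝ) ≤ Real.sqrt 8 * (y^(2*k)/(((2*k).factorial:ℝ))) := by positivity
    linarith

lemma besselTerm_nonneg (y : ℝ) (k : ℕ) : 0 ≤ (y/2)^(2*k)/((k.factorial:ℝ))^2 := by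
  rw [pow_mul]; positivity

lemma besselI0_nonneg (y : ℝ) : 0 ≤ besselI0 y :=
  tsum_nonneg (besselTerm_nonneg y)

lemma besselTerm_le_coshTerm (y : ℝ) (k : ℕ) :
    (y/2)^(2*k)/((k.factorial:ℝ))^2 ≤ y^(2*k)/(((2*k).factorial:ℝ)) := by
  rw [besselTerm_eq, div_le_div_iff₀ (by positivity) (by positivity)]
  have hA : (0:ℝ) ≤ y^(2*k) := by rw [pow_mul]; positivity
  have hF : (0:ℝ) < ((2*k).factorial:ℝ) := by positivity
  nlinarith [mul_le_mul_of_nonneg_right (cb_le k) hA, mul_le_mul_of_nonneg_right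
    (mul_le_mul_of_nonneg_right (cb_le k) hA) hF.le]

lemma besselI0_le_exp {y : ℝ} (hy : 0 ≤ y) : besselI0 y ≤ Real.exp y := by
  refine le_trans ((summable_besselTerm y).tsum_le_tsum (besselTerm_le_coshTerm y) (summable_coshTerm y)) ?_
  exact cosh_tsum_le_exp hy

lemma besselI0_sqrt_le {y : ℝ} (hy : 0 ≤ y) :
    besselI0 y * Real.sqrt (1+y) ≤ 5 * Real.exp y := by
  have h1 : besselI0 y * Real.sqrt (1+y)
      = ∑' k : ℕ, ((y/2)^(2*k)/((k.factorial:ℝ))^2) * Real.sqrt (1+y) := by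
    rw [besselI0, tsum_mul_right]
  have hsum1 : Summable (fun k : ℕ => Real.sqrt 8 * (y^(2*k)/(((2*k).factorial:ℝ)))) :=
    (summable_coshTerm y).mul_left _
  have hsum2 : Summable (fun k : ℕ =>
      Real.sqrt 2 * Real.exp (0.45*y) * ((y/2)^(2*k)/(((2*k).factorial:ℝ)))) :=
    (summable_coshTerm (y/2)).mul_left _
  have h2 : (∑' k : ℕ, ((y/2)^(2*k)/((k.factorial:ℝ))^2) * Real.sqrt (1+y))
      ≤ ∑' k : ℕ, (Real.sqrt 8 * (y^(2*k)/(((2*k).factorial:ℝ)))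
        + Real.sqrt 2 * Real.exp (0.45*y) * ((y/2)^(2*k)/(((2*k).factorial:ℝ)))) := by
    apply ((summable_besselTerm y).mul_right _).tsum_le_tsum (termwise_bound hy) (hsum1.add hsum2)
  rw [h1]
  refine h2.trans ?_
  rw [hsum1.tsum_add hsum2, tsum_mul_left, tsum_mul_left]
  have e1 : (∑' k : ℕ, y^(2*k)/(((2*k).factorial:ℝ))) ≤ Real.exp y := cosh_tsum_le_exp hy
  have e2 : (∑' k : ℕ, (y/2)^(2*k)/(((2*k).factorial:ℝ))) ≤ Real.exp (y/2) := cosh_tsum_le_exp (by linarith)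
  have s8 : Real.sqrt 8 ≤ 3 := by
    nlinarith [Real.sq_sqrt (show (0:ℝ) ≤ 8 by norm_num), Real.sqrt_nonneg 8]
  have s2 : Real.sqrt 2 ≤ 2 := by
    nlinarith [Real.sq_sqrt (show (0:ℝ) ≤ 2 by norm_num), Real.sqrt_nonneg 2]
  have hc1 : Real.sqrt 8 * (∑' k : ℕ, y^(2*k)/(((2*k).factorial:ℝ))) ≤ 3 * Real.exp y := by
    have hnn : 0 ≤ ∑' k : ℕ, y^(2*k)/(((2*k).factorial:ℝ)) :=
      tsum_nonneg (fun k => by rw [pow_mul]; positivity)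
    nlinarith [Real.sqrt_nonneg 8, Real.exp_nonneg y]
  have hc2 : Real.sqrt 2 * Real.exp (0.45*y) * (∑' k : ℕ, (y/2)^(2*k)/(((2*k).factorial:ℝ)))
      ≤ 2 * Real.exp y := by
    have hnn : 0 ≤ ∑' k : ℕ, (y/2)^(2*k)/(((2*k).factorial:ℝ)) :=
      tsum_nonneg (fun k => by rw [pow_mul]; positivity)
    have hee : Real.exp (0.45*y) * Real.exp (y/2) ≤ Real.exp y := by
      rw [← Real.exp_add]
      exact Real.exp_le_exp.mpr (by linarith)
    calc Real.sqrt 2 * Real.exp (0.45*y) * (∑' k : ℕ, (y/2)^(2*k)/(((2*k).factorial:ℝ)))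
        ≤ Real.sqrt 2 * Real.exp (0.45*y) * Real.exp (y/2) := by
          apply mul_le_mul_of_nonneg_left e2 (by positivity)
      _ = Real.sqrt 2 * (Real.exp (0.45*y) * Real.exp (y/2)) := by ring
      _ ≤ 2 * Real.exp y := by
          nlinarith [Real.sqrt_nonneg 2, Real.exp_nonneg y,
            mul_le_mul_of_nonneg_left hee (Real.sqrt_nonneg 2)]
  linarith

lemma measurable_besselI0 : Measurable besselI0 := by
  apply measurable_of_tendsto_metrizable' Filter.atTop
    (f := fun n x => ∑ k ∈ Finset.range n, (x/2)^(2*k)/((k.factorial:ℝ))^2)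
  · intro n
    apply Finset.measurable_sum
    intro k _
    fun_prop
  · rw [tendsto_pi_nhds]
    intro x
    exact (summable_besselTerm x).hasSum.tendsto_sum_nat

lemma measurable_h (d : ℕ) : Measurable (fun x : ℝ => (besselI0 (x / d)) ^ d * Real.exp (-x)) := by
  apply Measurable.mul
  · exact (measurable_besselI0.comp (measurable_id.div_const _)).pow_const _
  · fun_prop

lemma h_le_one {d : ℕ} {x : ℝ} (hx : 0 ≤ x) (hd : 1 ≤ d) :
    (besselI0 (x / d)) ^ d * Real.exp (-x) ≤ 1 := by
  have hd0 : (0:ℝ) < d := by exact_mod_cast hd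
  have hy : 0 ≤ x / d := by positivity
  have h1 : (besselI0 (x / d)) ^ d ≤ (Real.exp (x/d))^d :=
    pow_le_pow_left₀ (besselI0_nonneg _) (besselI0_le_exp hy) d
  have h2 : (Real.exp (x/d))^d = Real.exp x := by
    rw [← Real.exp_nat_mul]
    congr 1
    field_simp
  calc (besselI0 (x / d)) ^ d * Real.exp (-x) ≤ Real.exp x * Real.exp (-x) := by
        apply mul_le_mul_of_nonneg_right (h1.trans_eq h2) (Real.exp_nonneg _)
    _ = 1 := by rw [← Real.exp_add]; simp

lemma h_le_decay {d : ℕ} (hd : 3 ≤ d) {x : ℝ} (hx : 0 < x) :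
    (besselI0 (x / d)) ^ d * Real.exp (-x) ≤ (5^d * Real.sqrt d ^ 3) * x ^ (-(3/2) : ℝ) := by
  have hd0 : (0:ℝ) < d := by exact_mod_cast (by omega : 0 < d)
  set y := x / d with hy_def
  have hy : 0 ≤ y := by positivity
  have hs : 0 < Real.sqrt (1+y) := Real.sqrt_pos.mpr (by linarith)
  -- besselI0 y ≤ 5 exp y / sqrt (1+y)
  have h1 : besselI0 y ≤ 5 * Real.exp y / Real.sqrt (1+y) := by
    rw [le_div_iff₀ hs]
    exact besselI0_sqrt_le hy
  have h2 : (besselI0 y)^d ≤ (5 * Real.exp y)^d / (Real.sqrt (1+y))^d := by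
    rw [← div_pow]
    exact pow_le_pow_left₀ (besselI0_nonneg _) h1 d
  have h3 : (Real.sqrt (1+y))^3 ≤ (Real.sqrt (1+y))^d := by
    apply pow_le_pow_right₀ _ hd
    nlinarith [Real.sq_sqrt (by linarith : (0:ℝ) ≤ 1+y), Real.sqrt_nonneg (1+y)]
  have h4 : Real.sqrt y ^ 3 ≤ Real.sqrt (1+y)^3 := by
    apply pow_le_pow_left₀ (Real.sqrt_nonneg _)
    exact Real.sqrt_le_sqrt (by linarith)
  have hsy : 0 < Real.sqrt y := Real.sqrt_pos.mpr (by positivity)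
  have h5 : (besselI0 y)^d ≤ (5 * Real.exp y)^d / (Real.sqrt y)^3 := by
    refine h2.trans ?_
    apply div_le_div_of_nonneg_left (by positivity) (by positivity) (h4.trans h3)
  have hexp : (5 * Real.exp y)^d = 5^d * Real.exp x := by
    rw [mul_pow, ← Real.exp_nat_mul]
    congr 1
    rw [hy_def]
    field_simp
  -- sqrt y = sqrt x / sqrt d
  have hsqy : Real.sqrt y = Real.sqrt x / Real.sqrt d := by
    rw [hy_def, Real.sqrt_div hx.le]
  have hxr : x ^ (-(3/2) : ℝ) = ((Real.sqrt x)^3)⁻¹ := by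
    rw [Real.rpow_neg hx.le]
    congr 1
    rw [Real.sqrt_eq_rpow, ← Real.rpow_natCast (x ^ ((1:ℝ)/2)) 3, ← Real.rpow_mul hx.le]
    norm_num
  have key : (besselI0 y)^d * Real.exp (-x) ≤ 5^d * Real.exp x * Real.exp (-x) / (Real.sqrt y)^3 := by
    calc (besselI0 y)^d * Real.exp (-x) ≤ ((5 * Real.exp y)^d / (Real.sqrt y)^3) * Real.exp (-x) := by
          apply mul_le_mul_of_nonneg_right h5 (Real.exp_nonneg _)
      _ = (5 * Real.exp y)^d * Real.exp (-x) / (Real.sqrt y)^3 := by ring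
      _ = 5^d * Real.exp x * Real.exp (-x) / (Real.sqrt y)^3 := by rw [hexp]
  have hee : (5:ℝ)^d * Real.exp x * Real.exp (-x) = 5^d := by
    rw [mul_assoc, ← Real.exp_add]; simp
  rw [hee] at key
  refine key.trans ?_
  rw [hxr, hsqy, div_pow, div_div_eq_mul_div, div_le_iff₀ (by positivity)]
  rw [mul_assoc, inv_mul_cancel₀ (by positivity)]
  ring_nf
  exact le_refl _

lemma integrableOn_h {d : ℕ} (hd : 3 ≤ d) :
    IntegrableOn (fun x : ℝ => (besselI0 (x / d)) ^ d * Real.exp (-x)) (Set.Ioi 0) := by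
  have hmeas : AEStronglyMeasurable (fun x : ℝ => (besselI0 (x / d)) ^ d * Real.exp (-x))
      (volume.restrict (Set.Ioi (0:ℝ))) := (measurable_h d).aestronglyMeasurable
  have hsplit : Set.Ioi (0:ℝ) = Set.Ioc 0 1 ∪ Set.Ioi 1 := (Set.Ioc_union_Ioi_eq_Ioi (by norm_num)).symm
  rw [hsplit]
  apply IntegrableOn.union
  · -- bounded by 1 on Ioc 0 1
    apply Integrable.mono' (g := fun _ : ℝ => (1:ℝ))
    · exact integrable_const 1
    · exact (measurable_h d).aestronglyMeasurable
    · filter_upwards [ae_restrict_mem measurableSet_Ioc] with x hx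
      have h0 : 0 ≤ (besselI0 (x / d)) ^ d * Real.exp (-x) := by
        have := besselI0_nonneg (x / d); positivity
      rw [Real.norm_eq_abs, abs_of_nonneg h0]
      exact h_le_one hx.1.le (by omega)
  · -- decay on Ioi 1
    apply Integrable.mono' (g := fun x : ℝ => (5^d * Real.sqrt d ^ 3) * x ^ (-(3/2) : ℝ))
    · exact (integrableOn_Ioi_rpow_of_lt (by norm_num) one_pos).const_mul _
    · exact (measurable_h d).aestronglyMeasurable
    · filter_upwards [ae_restrict_mem measurableSet_Ioi] with x hx
      have h0 : 0 ≤ (besselI0 (x / d)) ^ d * Real.exp (-x) := by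
        have := besselI0_nonneg (x / d); positivity
      rw [Real.norm_eq_abs, abs_of_nonneg h0]
      exact h_le_decay hd (by simp only [Set.mem_Ioi] at hx; linarith)

open scoped ENNReal in
lemma ennreal_tsum_pow (f : ℕ → ℝ≥0∞) : ∀ n : ℕ,
    (∑' k, f k) ^ n = ∑' k : Fin n → ℕ, ∏ j, f (k j) := by
  intro n
  induction n with
  | zero =>
    simp only [pow_zero]
    rw [tsum_eq_single (fun i => i.elim0)]
    · simp
    · intro b hb
      exact absurd (Subsingleton.elim b _) hb
  | succ n ih =>
    rw [pow_succ, mul_comm, ih]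
    rw [← Equiv.tsum_eq (Fin.consEquiv (fun _ : Fin (n+1) => ℕ)) (fun k : Fin (n+1) → ℕ => ∏ j, f (k j))]
    have key : ∀ p : ℕ × (Fin n → ℕ),
        (∏ j : Fin (n+1), f ((Fin.consEquiv (fun _ : Fin (n+1) => ℕ)) p j)) = f p.1 * ∏ j : Fin n, f (p.2 j) := by
      intro p
      simp [Fin.consEquiv, Fin.prod_univ_succ]
    calc (∑' k, f k) * ∑' k : Fin n → ℕ, ∏ j, f (k j)
        = ∑' a : ℕ, f a * ∑' k : Fin n → ℕ, ∏ j, f (k j) := by rw [ENNReal.tsum_mul_right]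
      _ = ∑' a : ℕ, ∑' k : Fin n → ℕ, f a * ∏ j, f (k j) := by
          congr 1; funext a; rw [ENNReal.tsum_mul_left]
      _ = ∑' p : ℕ × (Fin n → ℕ), f p.1 * ∏ j, f (p.2 j) :=
          (ENNReal.tsum_prod' (f := fun p : ℕ × (Fin n → ℕ) => f p.1 * ∏ j, f (p.2 j))).symm
      _ = ∑' p : ℕ × (Fin n → ℕ), ∏ j : Fin (n+1), f ((Fin.consEquiv (fun _ : Fin (n+1) => ℕ)) p j) := by
          congr 1; funext p; rw [key p]

-- MAIN THEOREM PART (to be appended; uses earlier lemmas)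

/-- For every integer `d ≥ 3`,
`∫₀^∞ [I₀(x/d)]^d e^{-x} dx = ∑_{k₁,…,k_d ≥ 0} Γ(2k₁+⋯+2k_d+1) / ((k₁!⋯k_d!)² (2d)^{2(k₁+⋯+k_d)})`,
and this multiple series is convergent. -/
theorem integral_besselI0_pow_eq_multiple_series (d : ℕ) (hd : 3 ≤ d) :
    Summable (fun k : Fin d → ℕ =>
      Real.Gamma (2 * (∑ j, (k j : ℝ)) + 1) /
        ((∏ j, ((k j).factorial : ℝ) ^ 2) * (2 * d : ℝ) ^ (2 * ∑ j, k j))) ∧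
    (∫ x in Set.Ioi (0 : ℝ), (besselI0 (x / d)) ^ d * Real.exp (-x)) =
      ∑' k : Fin d → ℕ,
        Real.Gamma (2 * (∑ j, (k j : ℝ)) + 1) /
          ((∏ j, ((k j).factorial : ℝ) ^ 2) * (2 * d : ℝ) ^ (2 * ∑ j, k j)) := by
  have hd0 : (0:ℝ) < d := by exact_mod_cast (by omega : 0 < d)
  set T : (Fin d → ℕ) → ℝ := fun k =>
    Real.Gamma (2 * (∑ j, (k j : ℝ)) + 1) /
      ((∏ j, ((k j).factorial : ℝ) ^ 2) * (2 * d : ℝ) ^ (2 * ∑ j, k j)) with hT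
  have hTnn : ∀ k, 0 ≤ T k := by
    intro k
    apply div_nonneg
    · refine (Real.Gamma_pos_of_pos ?_).le
      have : (0:ℝ) ≤ ∑ j, ((k j : ℝ)) := Finset.sum_nonneg (fun j _ => Nat.cast_nonneg _)
      linarith
    · positivity
  have hhnn : ∀ x : ℝ, 0 ≤ (besselI0 (x / d)) ^ d * Real.exp (-x) := by
    intro x
    have := besselI0_nonneg (x / d)
    positivity
  have hdiv : ∀ x : ℝ, x / d / 2 = x / (2*d) := by
    intro x; rw [div_div, mul_comm]
  have hpnn : ∀ (k : ℕ) (x : ℝ), 0 ≤ (x/(2*(d:ℝ)))^(2*k) / ((k.factorial:ℝ))^2 := by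
    intro k x; rw [pow_mul]; positivity
  -- pointwise series expansion in ENNReal
  have hpoint : ∀ x : ℝ,
      ENNReal.ofReal ((besselI0 (x / d)) ^ d * Real.exp (-x)) =
      ∑' k : Fin d → ℕ, ENNReal.ofReal
        ((∏ j, (x/(2*(d:ℝ)))^(2*(k j)) / (((k j).factorial:ℝ))^2) * Real.exp (-x)) := by
    intro x
    rw [ENNReal.ofReal_mul (by have := besselI0_nonneg (x/d); positivity)]
    rw [ENNReal.ofReal_pow (besselI0_nonneg _)]
    have hb : besselI0 (x / d) = ∑' k : ℕ, (x/(2*(d:ℝ)))^(2*k) / ((k.factorial:ℝ))^2 := by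
      rw [besselI0]
      congr 1; funext k; rw [hdiv]
    rw [hb, ENNReal.ofReal_tsum_of_nonneg (fun k => hpnn k x) (by
      have := summable_besselTerm (x/d)
      simp only [hdiv x] at this
      exact this)]
    rw [ennreal_tsum_pow _ d, ← ENNReal.tsum_mul_right]
    congr 1
    funext k
    rw [← ENNReal.ofReal_prod_of_nonneg (fun j _ => hpnn (k j) x),
      ← ENNReal.ofReal_mul (Finset.prod_nonneg (fun j _ => hpnn (k j) x))]
  -- per-term lintegral
  have hterm : ∀ k : Fin d → ℕ,
      (∫⁻ x in Set.Ioi (0:ℝ), ENNReal.ofReal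
        ((∏ j, (x/(2*(d:ℝ)))^(2*(k j)) / (((k j).factorial:ℝ))^2) * Real.exp (-x)))
      = ENNReal.ofReal (T k) := by
    intro k
    set K : ℕ := ∑ j, k j with hK
    set D : ℝ := (∏ j, (((k j).factorial:ℝ))^2) * (2*(d:ℝ))^(2*K) with hD
    have hDpos : 0 < D := by
      rw [hD]
      apply mul_pos (Finset.prod_pos (fun j _ => by positivity)) (by positivity)
    have hprod2 : ∀ x : ℝ,
        (∏ j, (x/(2*(d:ℝ)))^(2*(k j)) / (((k j).factorial:ℝ))^2) * Real.exp (-x)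
        = (1/D) * (Real.exp (-x) * x^(2*K)) := by
      intro x
      rw [Finset.prod_div_distrib, Finset.prod_pow_eq_pow_sum,
        show (∑ j, 2*(k j)) = 2*K by rw [hK, Finset.mul_sum], div_pow]
      rw [hD]
      have h1 : ((2*(d:ℝ))^(2*K)) ≠ 0 := by positivity
      have h2 : (∏ j, (((k j).factorial:ℝ))^2) ≠ 0 := by
        apply ne_of_gt (Finset.prod_pos (fun j _ => by positivity))
      field_simp
    have hs : (0:ℝ) < 2*(K:ℝ)+1 := by positivity
    have harg : ∀ x : ℝ, Real.exp (-x) * x ^ ((2*(K:ℝ)+1) - 1) = Real.exp (-x) * x^(2*K) := by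
      intro x
      rw [show ((2*(K:ℝ)+1) - 1) = ((2*K:ℕ):ℝ) by push_cast; ring, Real.rpow_natCast]
    have hGint : IntegrableOn (fun x : ℝ => Real.exp (-x) * x^(2*K)) (Set.Ioi 0) := by
      have := Real.GammaIntegral_convergent hs
      simp only [harg] at this
      exact this
    have hGa : Real.Gamma (2*(K:ℝ)+1) = ∫ x in Set.Ioi (0:ℝ), Real.exp (-x) * x^(2*K) := by
      rw [Real.Gamma_eq_integral hs]
      congr 1; funext x; exact harg x
    have hofG : ENNReal.ofReal (Real.Gamma (2*(K:ℝ)+1))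
        = ∫⁻ x in Set.Ioi (0:ℝ), ENNReal.ofReal (Real.exp (-x) * x^(2*K)) := by
      rw [hGa]
      apply ofReal_integral_eq_lintegral_ofReal hGint
      apply Filter.Eventually.of_forall
      intro x
      have hx2 : (0:ℝ) ≤ x^(2*K) := by rw [pow_mul]; positivity
      positivity
    calc (∫⁻ x in Set.Ioi (0:ℝ), ENNReal.ofReal
          ((∏ j, (x/(2*(d:ℝ)))^(2*(k j)) / (((k j).factorial:ℝ))^2) * Real.exp (-x)))
        = ∫⁻ x in Set.Ioi (0:ℝ), ENNReal.ofReal (1/D) * ENNReal.ofReal (Real.exp (-x) * x^(2*K)) := by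
          apply lintegral_congr
          intro x
          rw [hprod2 x, ENNReal.ofReal_mul (by positivity)]
      _ = ENNReal.ofReal (1/D) * ∫⁻ x in Set.Ioi (0:ℝ), ENNReal.ofReal (Real.exp (-x) * x^(2*K)) :=
          lintegral_const_mul' _ _ ENNReal.ofReal_ne_top
      _ = ENNReal.ofReal (1/D) * ENNReal.ofReal (Real.Gamma (2*(K:ℝ)+1)) := by rw [hofG]
      _ = ENNReal.ofReal (T k) := by
          rw [← ENNReal.ofReal_mul (by positivity)]
          congr 1
          have harg2 : 2 * (∑ j, ((k j) : ℝ)) + 1 = 2*(K:ℝ)+1 := by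
            rw [hK]; push_cast; ring
          rw [hT]
          simp only [harg2, ← hK, ← hD]
          rw [one_div, inv_mul_eq_div]
  -- main lintegral identity
  have hmain : (∫⁻ x in Set.Ioi (0:ℝ), ENNReal.ofReal ((besselI0 (x / d)) ^ d * Real.exp (-x)))
      = ∑' k : Fin d → ℕ, ENNReal.ofReal (T k) := by
    calc (∫⁻ x in Set.Ioi (0:ℝ), ENNReal.ofReal ((besselI0 (x / d)) ^ d * Real.exp (-x)))
        = ∫⁻ x in Set.Ioi (0:ℝ), ∑' k : Fin d → ℕ, ENNReal.ofReal
            ((∏ j, (x/(2*(d:ℝ)))^(2*(k j)) / (((k j).factorial:ℝ))^2) * Real.exp (-x)) :=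
          lintegral_congr (fun x => hpoint x)
      _ = ∑' k : Fin d → ℕ, ∫⁻ x in Set.Ioi (0:ℝ), ENNReal.ofReal
            ((∏ j, (x/(2*(d:ℝ)))^(2*(k j)) / (((k j).factorial:ℝ))^2) * Real.exp (-x)) := by
          apply lintegral_tsum
          intro k
          apply Measurable.aemeasurable
          apply Measurable.ennreal_ofReal
          apply Measurable.mul _ (by fun_prop)
          apply Finset.measurable_prod
          intro j _
          fun_prop
      _ = ∑' k : Fin d → ℕ, ENNReal.ofReal (T k) := tsum_congr hterm
  -- convert to the real statement
  have hInt : IntegrableOn (fun x : ℝ => (besselI0 (x / d)) ^ d * Real.exp (-x)) (Set.Ioi 0) :=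
    integrableOn_h hd
  have hofReal : ENNReal.ofReal (∫ x in Set.Ioi (0:ℝ), (besselI0 (x / d)) ^ d * Real.exp (-x))
      = ∑' k : Fin d → ℕ, ENNReal.ofReal (T k) := by
    rw [ofReal_integral_eq_lintegral_ofReal hInt (Filter.Eventually.of_forall hhnn), hmain]
  have hne : (∑' k : Fin d → ℕ, ENNReal.ofReal (T k)) ≠ ⊤ := by
    rw [← hofReal]; exact ENNReal.ofReal_ne_top
  constructor
  · have hsum := ENNReal.summable_toReal hne
    exact hsum.congr (fun k => ENNReal.toReal_ofReal (hTnn k))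
  · have hint_nn : 0 ≤ ∫ x in Set.Ioi (0:ℝ), (besselI0 (x / d)) ^ d * Real.exp (-x) :=
      integral_nonneg hhnn
    calc (∫ x in Set.Ioi (0:ℝ), (besselI0 (x / d)) ^ d * Real.exp (-x))
        = (ENNReal.ofReal (∫ x in Set.Ioi (0:ℝ), (besselI0 (x / d)) ^ d * Real.exp (-x))).toReal :=
          (ENNReal.toReal_ofReal hint_nn).symm
      _ = (∑' k : Fin d → ℕ, ENNReal.ofReal (T k)).toReal := by rw [hofReal]
      _ = ∑' k : Fin d → ℕ, (ENNReal.ofReal (T k)).toReal :=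
          ENNReal.tsum_toReal_eq (fun k => ENNReal.ofReal_ne_top)
      _ = ∑' k : Fin d → ℕ, T k := tsum_congr (fun k => ENNReal.toReal_ofReal (hTnn k))
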